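/- Let c : ℝ → ℝ be twice continuously differentiable, and let Π, K⁰, K¹ : ℝ³ → ℝ (arguments (t, x, u)) be continuously differentiable with ∂K¹/∂u (t,x,u) = c'(u) · ∂K⁰/∂u (t,x,u) for all (t,x,u). Define Q(t,x,u) = (∂K⁰/∂u)(t,x,u) · Π(t,x,u) + (∂K⁰/∂t)(t,x,u) + (∂K¹/∂x)(t,x,u). Then every differentiable u : ℝ² → ℝ satisfying ∂_t u + ∂_x( c(u(t,x)) ) = Π(t, x, u(t,x)) also satisfies ∂_t( K⁰(t, x, u(t,x)) ) + ∂_x( K¹(t, x, u(t,x)) ) = Q(t, x, u(t,x)) for all (t,x). -/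

import Mathlib

private lemma comp_hasDerivAt' (F : ℝ × ℝ × ℝ → ℝ) (hF : ContDiff ℝ 1 F)
    (γ : ℝ → ℝ × ℝ × ℝ) (v : ℝ × ℝ × ℝ) (t : ℝ) (hγ : HasDerivAt γ v t) :
    HasDerivAt (fun s => F (γ s)) (fderiv ℝ F (γ t) v) t :=
  ((hF.differentiable one_ne_zero) (γ t)).hasFDerivAt.comp_hasDerivAt t hγ

/-- supplementary balance laws for the scalar balance equation
`u_t + (c(u))_x = Π(t,x,u)` in (1+1)-dimensional space-time.  If
`∂K¹/∂u = c'(u) ∂K⁰/∂u`, then along every differentiable solution `u(t,x)` one has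
`d_t K⁰ + d_x K¹ = Q` with `Q = (∂K⁰/∂u)Π + ∂K⁰/∂t + ∂K¹/∂x`. -/
theorem stmt_9 (c : ℝ → ℝ) (hc : ContDiff ℝ 2 c)
    (P K0 K1 : ℝ × ℝ × ℝ → ℝ)
    (hP : ContDiff ℝ 1 P) (hK0 : ContDiff ℝ 1 K0) (hK1 : ContDiff ℝ 1 K1)
    (hflux : ∀ t x u, deriv (fun u' => K1 (t, x, u')) u =
      deriv c u * deriv (fun u' => K0 (t, x, u')) u)
    (u : ℝ × ℝ → ℝ) (hu : Differentiable ℝ u)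
    (hsol : ∀ t x, deriv (fun s => u (s, x)) t + deriv (fun y => c (u (t, y))) x =
      P (t, x, u (t, x))) :
    ∀ t x,
      deriv (fun s => K0 (s, x, u (s, x))) t + deriv (fun y => K1 (t, y, u (t, y))) x =
        deriv (fun u' => K0 (t, x, u')) (u (t, x)) * P (t, x, u (t, x)) +
        deriv (fun t' => K0 (t', x, u (t, x))) t +
        deriv (fun x' => K1 (t, x', u (t, x))) x := by
  intro t x
  set a := u (t, x) with ha
  set p : ℝ × ℝ × ℝ := (t, x, a) with hp
  have hcd : Differentiable ℝ c := hc.differentiable two_ne_zero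
  -- partial derivatives of u
  have hutD : DifferentiableAt ℝ (fun s => u (s, x)) t :=
    (hu (t, x)).comp t (DifferentiableAt.prodMk differentiableAt_id (differentiableAt_const x))
  have huxD : DifferentiableAt ℝ (fun y => u (t, y)) x :=
    (hu (t, x)).comp x (DifferentiableAt.prodMk (differentiableAt_const t) differentiableAt_id)
  set ut := deriv (fun s => u (s, x)) t with hut
  set ux := deriv (fun y => u (t, y)) x with hux
  have hutH : HasDerivAt (fun s => u (s, x)) ut t := hutD.hasDerivAt
  have huxH : HasDerivAt (fun y => u (t, y)) ux x := huxD.hasDerivAt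
  -- abbreviations for directional derivatives
  set L0 := fderiv ℝ K0 p with hL0
  set L1 := fderiv ℝ K1 p with hL1
  -- total derivatives
  have hT : HasDerivAt (fun s => K0 (s, x, u (s, x))) (L0 (1, 0, ut)) t :=
    comp_hasDerivAt' K0 hK0 (fun s => (s, x, u (s, x))) (1, 0, ut) t
      (HasDerivAt.prodMk (hasDerivAt_id t) (HasDerivAt.prodMk (hasDerivAt_const t x) hutH))
  have hX : HasDerivAt (fun y => K1 (t, y, u (t, y))) (L1 (0, 1, ux)) x :=
    comp_hasDerivAt' K1 hK1 (fun y => (t, y, u (t, y))) (0, 1, ux) x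
      (HasDerivAt.prodMk (hasDerivAt_const x t) (HasDerivAt.prodMk (hasDerivAt_id x) huxH))
  -- partial derivatives of K0, K1
  have h0t : HasDerivAt (fun t' => K0 (t', x, a)) (L0 (1, 0, 0)) t :=
    comp_hasDerivAt' K0 hK0 (fun t' => (t', x, a)) (1, 0, 0) t
      (HasDerivAt.prodMk (hasDerivAt_id t) (HasDerivAt.prodMk (hasDerivAt_const t x) (hasDerivAt_const t a)))
  have h0u : HasDerivAt (fun u' => K0 (t, x, u')) (L0 (0, 0, 1)) a :=
    comp_hasDerivAt' K0 hK0 (fun u' => (t, x, u')) (0, 0, 1) a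
      (HasDerivAt.prodMk (hasDerivAt_const a t) (HasDerivAt.prodMk (hasDerivAt_const a x) (hasDerivAt_id a)))
  have h1x : HasDerivAt (fun x' => K1 (t, x', a)) (L1 (0, 1, 0)) x :=
    comp_hasDerivAt' K1 hK1 (fun x' => (t, x', a)) (0, 1, 0) x
      (HasDerivAt.prodMk (hasDerivAt_const x t) (HasDerivAt.prodMk (hasDerivAt_id x) (hasDerivAt_const x a)))
  have h1u : HasDerivAt (fun u' => K1 (t, x, u')) (L1 (0, 0, 1)) a :=
    comp_hasDerivAt' K1 hK1 (fun u' => (t, x, u')) (0, 0, 1) a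
      (HasDerivAt.prodMk (hasDerivAt_const a t) (HasDerivAt.prodMk (hasDerivAt_const a x) (hasDerivAt_id a)))
  -- derivative of c ∘ u in x
  have hcu : HasDerivAt (fun y => c (u (t, y))) (deriv c a * ux) x :=
    ((hcd a).hasDerivAt).comp x huxH
  -- solution equation
  have hsol' : ut + deriv c a * ux = P (t, x, a) := by
    have := hsol t x
    rwa [hcu.deriv] at this
  -- flux condition at (t,x,a)
  have hfl : L1 (0, 0, 1) = deriv c a * L0 (0, 0, 1) := by
    have := hflux t x a
    rwa [h1u.deriv, h0u.deriv] at this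
  -- linearity
  have lin0 : L0 (1, 0, ut) = L0 (1, 0, 0) + ut * L0 (0, 0, 1) := by
    have : ((1 : ℝ), (0 : ℝ), ut) = ((1 : ℝ), (0 : ℝ), (0 : ℝ)) + ut • ((0 : ℝ), (0 : ℝ), (1 : ℝ)) := by
      simp [Prod.ext_iff]
    rw [this, map_add, map_smul, smul_eq_mul]
  have lin1 : L1 (0, 1, ux) = L1 (0, 1, 0) + ux * L1 (0, 0, 1) := by
    have : ((0 : ℝ), (1 : ℝ), ux) = ((0 : ℝ), (1 : ℝ), (0 : ℝ)) + ux • ((0 : ℝ), (0 : ℝ), (1 : ℝ)) := by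
      simp [Prod.ext_iff]
    rw [this, map_add, map_smul, smul_eq_mul]
  rw [hT.deriv, hX.deriv, h0t.deriv, h0u.deriv, h1x.deriv, lin0, lin1, hfl, ← hsol']
  ring
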